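/- If α ≤ 1/2, the stochastic solution of x = G(x) is unique: any two nonnegative solutions x, y with 1ᵀx = 1ᵀy = 1 are equal. -/
import Mathlib


noncomputable def Gmap (n : ℕ) (α : ℝ) (v : Fin n → ℝ)
    (R : Matrix (Fin n) (Fin n × Fin n) ℝ) (x : Fin n → ℝ) : Fin n → ℝ :=
  α • R.mulVec (fun p => x p.1 * x p.2) + (1 - α) • v

lemma Gmap_apply {n : ℕ} (α : ℝ) (v : Fin n → ℝ)
    (R : Matrix (Fin n) (Fin n × Fin n) ℝ) (x : Fin n → ℝ) (i : Fin n) :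
    Gmap n α v R x i = α * (∑ p, R i p * (x p.1 * x p.2)) + (1 - α) * v i := by
  simp [Gmap, Matrix.mulVec, dotProduct]

lemma Gmap_mono {n : ℕ} {α : ℝ} (hα : 0 ≤ α) {v : Fin n → ℝ}
    {R : Matrix (Fin n) (Fin n × Fin n) ℝ} (hR : ∀ i j, 0 ≤ R i j)
    {a b : Fin n → ℝ} (ha : ∀ i, 0 ≤ a i) (hab : ∀ i, a i ≤ b i)
    (i : Fin n) : Gmap n α v R a i ≤ Gmap n α v R b i := by
  rw [Gmap_apply, Gmap_apply]
  have : (∑ p, R i p * (a p.1 * a p.2)) ≤ ∑ p, R i p * (b p.1 * b p.2) := by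
    apply Finset.sum_le_sum
    intro p _
    exact mul_le_mul_of_nonneg_left
      (mul_le_mul (hab p.1) (hab p.2) (ha p.2) ((ha p.1).trans (hab p.1)))
      (hR i p)
  nlinarith [this]

lemma Gmap_nonneg {n : ℕ} {α : ℝ} (hα : 0 ≤ α) (hα1 : α ≤ 1) {v : Fin n → ℝ}
    (hv : ∀ i, 0 ≤ v i)
    {R : Matrix (Fin n) (Fin n × Fin n) ℝ} (hR : ∀ i j, 0 ≤ R i j)
    {a : Fin n → ℝ} (ha : ∀ i, 0 ≤ a i) (i : Fin n) :
    0 ≤ Gmap n α v R a i := by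
  rw [Gmap_apply]
  have h1 : 0 ≤ ∑ p, R i p * (a p.1 * a p.2) :=
    Finset.sum_nonneg fun p _ => mul_nonneg (hR i p) (mul_nonneg (ha p.1) (ha p.2))
  have := hv i
  nlinarith

lemma Gmap_sum {n : ℕ} (α : ℝ) (v : Fin n → ℝ)
    {R : Matrix (Fin n) (Fin n × Fin n) ℝ} (hRs : ∀ j, ∑ i, R i j = 1)
    (a : Fin n → ℝ) :
    ∑ i, Gmap n α v R a i = α * (∑ i, a i)^2 + (1 - α) * (∑ i, v i) := by
  have key : ∑ i, ∑ p, R i p * (a p.1 * a p.2) = (∑ i, a i)^2 := by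
    rw [Finset.sum_comm]
    have : ∀ p : Fin n × Fin n, ∑ i, R i p * (a p.1 * a p.2)
        = a p.1 * a p.2 := by
      intro p
      rw [← Finset.sum_mul, hRs p, one_mul]
    rw [Finset.sum_congr rfl fun p _ => this p, sq, Fintype.sum_prod_type]
    exact (Finset.sum_mul_sum _ _ _ _).symm
  simp only [Gmap_apply, Finset.sum_add_distrib, ← Finset.mul_sum, key]

theorem stmt_10 (n : ℕ) (hn : 1 ≤ n) (α : ℝ) (hα : α ∈ Set.Ioo (0:ℝ) 1)
    (hα2 : α ≤ 1 / 2)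
    (v : Fin n → ℝ) (hv : ∀ i, 0 ≤ v i) (hv1 : ∑ i, v i = 1)
    (R : Matrix (Fin n) (Fin n × Fin n) ℝ) (hR : ∀ i j, 0 ≤ R i j)
    (hRs : ∀ j, ∑ i, R i j = 1)
    (x y : Fin n → ℝ)
    (hx0 : ∀ i, 0 ≤ x i) (hxfix : Gmap n α v R x = x) (hx1 : ∑ i, x i = 1)
    (hy0 : ∀ i, 0 ≤ y i) (hyfix : Gmap n α v R y = y) (hy1 : ∑ i, y i = 1) :
    x = y := by
  obtain ⟨hα0, hα1⟩ := hα
  by_contra hxy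
  set G := Gmap n α v R with hG
  set z : Fin n → ℝ := fun i => min (x i) (y i) with hz
  have hz0 : ∀ i, 0 ≤ z i := fun i => le_min (hx0 i) (hy0 i)
  -- z has sum < 1
  have hex : ∃ i, z i < x i := by
    by_contra h
    push_neg at h
    have hxy' : ∀ i, x i ≤ y i := by
      intro i
      have := h i
      simp only [hz] at this
      rcases le_or_gt (x i) (y i) with h'|h'
      · exact h'
      · simp [min_eq_right h'.le] at this; linarith
    apply hxy
    funext i
    have := (Finset.sum_eq_sum_iff_of_le (fun i _ => hxy' i)).1 (hx1.trans hy1.symm)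
    exact this i (Finset.mem_univ i)
  obtain ⟨i0, hi0⟩ := hex
  have hzsum : ∑ i, z i < 1 := by
    rw [← hx1]
    exact Finset.sum_lt_sum (fun i _ => min_le_left _ _) ⟨i0, Finset.mem_univ i0, hi0⟩
  -- G z ≤ z
  have hGz : ∀ i, G z i ≤ z i := by
    intro i
    have h1 : G z i ≤ x i := by
      rw [← hxfix]
      exact Gmap_mono hα0.le hR hz0 (fun j => min_le_left _ _) i
    have h2 : G z i ≤ y i := by
      rw [← hyfix]
      exact Gmap_mono hα0.le hR hz0 (fun j => min_le_right _ _) i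
    exact le_min h1 h2
  -- iterates
  set u : ℕ → Fin n → ℝ := fun k => G^[k] z with hu
  have hu_succ : ∀ k, u (k+1) = G (u k) := by
    intro k; simp [hu, Function.iterate_succ_apply']
  have hkey : ∀ k, (∀ i, 0 ≤ u k i) ∧ (∀ i, u (k+1) i ≤ u k i) := by
    intro k
    induction k with
    | zero =>
      refine ⟨hz0, ?_⟩
      intro i
      rw [hu_succ 0]
      exact hGz i
    | succ m ih =>
      obtain ⟨ih0, ih1⟩ := ih
      have h0 : ∀ i, 0 ≤ u (m+1) i := by
        intro i
        rw [hu_succ m]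
        exact Gmap_nonneg hα0.le hα1.le hv hR ih0 i
      refine ⟨h0, ?_⟩
      intro i
      have h := Gmap_mono hα0.le (v := v) hR h0 ih1 i
      rw [hu_succ m] at h
      rw [hu_succ (m+1), hu_succ m]
      exact h
  have hnn : ∀ k i, 0 ≤ u k i := fun k => (hkey k).1
  have hanti : ∀ i, Antitone fun k => u k i := by
    intro i
    apply antitone_nat_of_succ_le
    intro k
    exact (hkey k).2 i
  -- limits
  set L : Fin n → ℝ := fun i => ⨅ k, u k i with hL
  have hbd : ∀ i, BddBelow (Set.range fun k => u k i) := by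
    intro i
    refine ⟨0, ?_⟩
    rintro _ ⟨k, rfl⟩
    exact hnn k i
  have htend : ∀ i, Filter.Tendsto (fun k => u k i) Filter.atTop (nhds (L i)) := by
    intro i
    exact tendsto_atTop_ciInf (hanti i) (hbd i)
  -- L is a fixed point
  have hfix : ∀ i, G L i = L i := by
    intro i
    have h1 : Filter.Tendsto (fun k => G (u k) i) Filter.atTop (nhds (G L i)) := by
      simp only [hG, Gmap_apply]
      apply Filter.Tendsto.add
      · apply Filter.Tendsto.const_mul
        apply tendsto_finset_sum
        intro p _
        exact Filter.Tendsto.const_mul _ ((htend p.1).mul (htend p.2))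
      · exact tendsto_const_nhds
    have h2 : Filter.Tendsto (fun k => G (u k) i) Filter.atTop (nhds (L i)) := by
      have : (fun k => G (u k) i) = fun k => u (k+1) i := by
        funext k; rw [hu_succ k]
      rw [this]
      exact (htend i).comp (Filter.tendsto_add_atTop_nat 1)
    exact tendsto_nhds_unique h1 h2
  -- sum of L
  have hLle : ∀ i, L i ≤ z i := by
    intro i
    exact ciInf_le (hbd i) 0
  have hLsum : ∑ i, L i < 1 := lt_of_le_of_lt (Finset.sum_le_sum fun i _ => hLle i) hzsum
  set s : ℝ := ∑ i, L i with hs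
  have hquad : s = α * s^2 + (1 - α) := by
    have := Gmap_sum α v hRs L
    rw [hv1, mul_one] at this
    rw [hs, ← this]
    exact (Finset.sum_congr rfl fun i _ => (hfix i)).symm
  nlinarith [hquad, hLsum, mul_pos hα0 (sub_pos.2 hLsum)]
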